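/- Let v(r) := ∫₀^r e^{ϑt} s_K(t)^{n-1} dt with ϑ ≥ 0, K ∈ ℝ, n ≥ 2 (and r ≤ π/(2√K) when K > 0). Then for 0 < r₁ ≤ r₂ (within the allowed range), v(r₂)/v(r₁) ≤ e^{(ϑ + (n-1)√|K|) r₂} (r₂/r₁)^n. -/

import Mathlib

open Real

noncomputable def sK (K t : ℝ) : ℝ :=
  if 0 < K then Real.sin (Real.sqrt K * t) / Real.sqrt K
  else if K = 0 then t
  else Real.sinh (Real.sqrt (-K) * t) / Real.sqrt (-K)

lemma aux_exp_sin (x : ℝ) (hx : 0 ≤ x) (hx2 : x ≤ Real.pi / 2) :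
    x ≤ Real.exp x * Real.sin x := by
  have hmono : MonotoneOn (fun y => Real.exp y * Real.sin y - y)
      (Set.Icc 0 (Real.pi / 2)) := by
    apply monotoneOn_of_deriv_nonneg (convex_Icc _ _)
    · fun_prop
    · exact ((Real.differentiable_exp.mul Real.differentiable_sin).sub
        differentiable_id).differentiableOn
    · intro y hy
      rw [interior_Icc] at hy
      have hd : HasDerivAt (fun y => Real.exp y * Real.sin y - y)
          (Real.exp y * Real.sin y + Real.exp y * Real.cos y - 1) y := by
        have := ((Real.hasDerivAt_exp y).mul (Real.hasDerivAt_sin y)).sub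
          (hasDerivAt_id y)
        exact this.congr_deriv (by ring)
      rw [hd.deriv]
      have h1 : 1 ≤ Real.exp y := Real.one_le_exp hy.1.le
      have hs : 0 ≤ Real.sin y := Real.sin_nonneg_of_nonneg_of_le_pi hy.1.le
        (le_trans hy.2.le (by linarith [Real.pi_pos]))
      have hc : 0 ≤ Real.cos y := Real.cos_nonneg_of_mem_Icc
        ⟨by linarith [Real.pi_pos, hy.1], hy.2.le⟩
      have hs1 : Real.sin y ≤ 1 := Real.sin_le_one y
      have hc1 : Real.cos y ≤ 1 := Real.cos_le_one y
      have hsc : 1 ≤ Real.sin y + Real.cos y := by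
        nlinarith [Real.sin_sq_add_cos_sq y]
      nlinarith
  have h0 : (0:ℝ) ∈ Set.Icc (0:ℝ) (Real.pi / 2) :=
    ⟨le_refl 0, by linarith [Real.pi_pos]⟩
  have := hmono h0 ⟨hx, hx2⟩ hx
  simp only [Real.exp_zero, Real.sin_zero, mul_zero, sub_zero, one_mul] at this
  linarith

lemma aux_sinh_le (x : ℝ) (hx : 0 ≤ x) : Real.sinh x ≤ x * Real.exp x := by
  rw [Real.sinh_eq]
  have h1 : 1 - 2 * x ≤ Real.exp (-(2 * x)) := by
    have := Real.add_one_le_exp (-(2*x)); linarith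
  have h2 : Real.exp (-x) = Real.exp x * Real.exp (-(2*x)) := by
    rw [← Real.exp_add]; ring_nf
  have h3 : (0:ℝ) < Real.exp x := Real.exp_pos x
  rw [h2]
  nlinarith

lemma key_ratio (n : ℕ) (hn : 2 ≤ n) (ϑ r₁ r₂ a b : ℝ)
    (hϑ : 0 ≤ ϑ) (h1 : 0 < r₁) (h12 : r₁ ≤ r₂) (hb : 0 < b)
    (f : ℝ → ℝ) (hf : Continuous f)
    (hub : ∀ t ∈ Set.Icc (0:ℝ) r₂, 0 ≤ f t ∧ f t ≤ a * t)
    (hlb : ∀ t ∈ Set.Icc (0:ℝ) r₁, b * t ≤ f t) :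
    (∫ t in (0:ℝ)..r₂, Real.exp (ϑ * t) * f t ^ (n - 1)) /
      (∫ t in (0:ℝ)..r₁, Real.exp (ϑ * t) * f t ^ (n - 1)) ≤
    Real.exp (ϑ * r₂) * (a / b) ^ (n - 1) * (r₂ / r₁) ^ n := by
  have hr2 : 0 < r₂ := lt_of_lt_of_le h1 h12
  have ha : 0 < a := by
    have h := hub r₁ ⟨h1.le, h12⟩
    have h' := hlb r₁ ⟨h1.le, le_refl _⟩
    have h0 : (0:ℝ) < b * r₁ := mul_pos hb h1
    have haa : 0 < a * r₁ := lt_of_lt_of_le h0 (le_trans h' h.2)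
    by_contra hna
    push_neg at hna
    nlinarith
  have hInt : ∀ r : ℝ, IntervalIntegrable
      (fun t => Real.exp (ϑ * t) * f t ^ (n - 1)) MeasureTheory.volume 0 r := by
    intro r
    exact (Continuous.mul (by fun_prop) (hf.pow _)).intervalIntegrable 0 r
  have hpowInt : ∀ (c r : ℝ), IntervalIntegrable
      (fun t => Real.exp (ϑ * r₂) * (c ^ (n-1) * t ^ (n - 1))) MeasureTheory.volume 0 r := by
    intro c r; exact (by fun_prop : Continuous fun t : ℝ =>
      Real.exp (ϑ * r₂) * (c ^ (n-1) * t ^ (n - 1))).intervalIntegrable 0 r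
  have hIntPow : ∀ r : ℝ, ∫ t in (0:ℝ)..r, t ^ (n-1) = r ^ n / n := by
    intro r
    rw [integral_pow, Nat.sub_add_cancel (by omega : 1 ≤ n),
      Nat.cast_sub (by omega : 1 ≤ n), zero_pow (by omega : n ≠ 0)]
    push_cast
    ring_nf
  -- numerator upper bound
  have hNum : (∫ t in (0:ℝ)..r₂, Real.exp (ϑ * t) * f t ^ (n - 1)) ≤
      Real.exp (ϑ * r₂) * a ^ (n-1) * (r₂ ^ n / n) := by
    have hmono := intervalIntegral.integral_mono_on hr2.le (hInt r₂) (hpowInt a r₂)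
      (fun t ht => by
        have h := hub t ht
        have he : Real.exp (ϑ * t) ≤ Real.exp (ϑ * r₂) :=
          Real.exp_le_exp.2 (by nlinarith [ht.1, ht.2])
        have hp : f t ^ (n-1) ≤ (a * t) ^ (n-1) := pow_le_pow_left₀ h.1 h.2 _
        calc Real.exp (ϑ * t) * f t ^ (n-1) ≤ Real.exp (ϑ * r₂) * (a * t) ^ (n-1) := by
              apply mul_le_mul he hp (pow_nonneg h.1 _) (Real.exp_pos _).le
          _ = Real.exp (ϑ * r₂) * (a ^ (n-1) * t ^ (n-1)) := by rw [mul_pow]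
          )
    calc (∫ t in (0:ℝ)..r₂, Real.exp (ϑ * t) * f t ^ (n - 1))
        ≤ ∫ t in (0:ℝ)..r₂, Real.exp (ϑ * r₂) * (a ^ (n-1) * t ^ (n-1)) := hmono
      _ = Real.exp (ϑ * r₂) * a ^ (n-1) * (r₂ ^ n / n) := by
          rw [intervalIntegral.integral_const_mul]
          rw [intervalIntegral.integral_const_mul, hIntPow r₂]; ring
  -- denominator lower bound
  have hDen : b ^ (n-1) * (r₁ ^ n / n) ≤
      (∫ t in (0:ℝ)..r₁, Real.exp (ϑ * t) * f t ^ (n - 1)) := by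
    have hmono := intervalIntegral.integral_mono_on h1.le
      ((by fun_prop : Continuous fun t : ℝ => b ^ (n-1) * t ^ (n - 1)).intervalIntegrable 0 r₁)
      (hInt r₁)
      (fun t ht => by
        have h := hlb t ht
        have he : 1 ≤ Real.exp (ϑ * t) := Real.one_le_exp (by nlinarith [ht.1])
        have hbt : 0 ≤ b * t := mul_nonneg hb.le ht.1
        have hft : 0 ≤ f t := le_trans hbt h
        have hp : (b * t) ^ (n-1) ≤ f t ^ (n-1) := pow_le_pow_left₀ hbt h _
        calc b ^ (n-1) * t ^ (n-1) = (b * t) ^ (n-1) := (mul_pow _ _ _).symm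
          _ ≤ f t ^ (n-1) := hp
          _ ≤ Real.exp (ϑ * t) * f t ^ (n-1) :=
              le_mul_of_one_le_left (pow_nonneg hft _) he)
    calc b ^ (n-1) * (r₁ ^ n / n)
        = ∫ t in (0:ℝ)..r₁, b ^ (n-1) * t ^ (n-1) := by
          rw [intervalIntegral.integral_const_mul, hIntPow r₁]
      _ ≤ _ := hmono
  have hDenPos : 0 < (∫ t in (0:ℝ)..r₁, Real.exp (ϑ * t) * f t ^ (n - 1)) :=
    lt_of_lt_of_le (by positivity) hDen
  have hDlbPos : (0:ℝ) < b ^ (n-1) * (r₁ ^ n / n) := by positivity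
  calc (∫ t in (0:ℝ)..r₂, Real.exp (ϑ * t) * f t ^ (n - 1)) /
        (∫ t in (0:ℝ)..r₁, Real.exp (ϑ * t) * f t ^ (n - 1))
      ≤ (Real.exp (ϑ * r₂) * a ^ (n-1) * (r₂ ^ n / n)) / (b ^ (n-1) * (r₁ ^ n / n)) :=
        div_le_div₀ (by positivity) hNum hDlbPos hDen
    _ = Real.exp (ϑ * r₂) * (a / b) ^ (n - 1) * (r₂ / r₁) ^ n := by
        rw [div_pow, div_pow]
        have hn0 : (n:ℝ) ≠ 0 := by positivity
        field_simp

theorem comparison_volume_ratio (n : ℕ) (hn : 2 ≤ n) (ϑ K r₁ r₂ : ℝ)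
    (hϑ : 0 ≤ ϑ) (h1 : 0 < r₁) (h12 : r₁ ≤ r₂)
    (hK : 0 < K → r₂ ≤ Real.pi / (2 * Real.sqrt K)) :
    (∫ t in (0:ℝ)..r₂, Real.exp (ϑ * t) * (sK K t) ^ (n - 1)) /
      (∫ t in (0:ℝ)..r₁, Real.exp (ϑ * t) * (sK K t) ^ (n - 1)) ≤
    Real.exp ((ϑ + ((n : ℝ) - 1) * Real.sqrt |K|) * r₂) * (r₂ / r₁) ^ n := by
  have hr2 : 0 < r₂ := lt_of_lt_of_le h1 h12
  set c : ℝ := Real.sqrt |K| with hc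
  have hc0 : 0 ≤ c := Real.sqrt_nonneg _
  -- RHS rewriting
  have hcast : ((n:ℝ) - 1) = ((n - 1 : ℕ) : ℝ) := by
    rw [Nat.cast_sub (by omega : 1 ≤ n)]; norm_num
  have hRHS : Real.exp ((ϑ + ((n : ℝ) - 1) * c) * r₂) * (r₂ / r₁) ^ n =
      Real.exp (ϑ * r₂) * (Real.exp (c * r₂)) ^ (n-1) * (r₂ / r₁) ^ n := by
    rw [hcast, show (ϑ + ((n - 1 : ℕ):ℝ) * c) * r₂ =
      ϑ * r₂ + ((n - 1 : ℕ):ℝ) * (c * r₂) by ring, Real.exp_add, Real.exp_nat_mul]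
  rw [hRHS]
  have hfc : Continuous (sK K) := by
    unfold sK
    split_ifs with h h
    · fun_prop
    · fun_prop
    · fun_prop
  rcases lt_or_ge 0 K with hKpos | hKnp
  · -- K > 0 : a = 1, b = exp (-(c * r₂))
    have habs : |K| = K := abs_of_pos hKpos
    have hsq : 0 < Real.sqrt K := Real.sqrt_pos.2 hKpos
    have hcK : c = Real.sqrt K := by rw [hc, habs]
    have hr2' : Real.sqrt K * r₂ ≤ Real.pi / 2 := by
      have h2s : (0:ℝ) < 2 * Real.sqrt K := by positivity
      have := hK hKpos
      rw [le_div_iff₀ h2s] at this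
      nlinarith
    have key := key_ratio n hn ϑ r₁ r₂ 1 (Real.exp (-(c * r₂))) hϑ h1 h12
      (Real.exp_pos _) (sK K) hfc
      (fun t ht => by
        have ht0 : 0 ≤ t := ht.1
        constructor
        · simp only [sK, if_pos hKpos]
          apply div_nonneg _ hsq.le
          apply Real.sin_nonneg_of_nonneg_of_le_pi (mul_nonneg hsq.le ht0)
          have : Real.sqrt K * t ≤ Real.sqrt K * r₂ := by nlinarith [ht.2, hsq]
          linarith [Real.pi_pos, hr2', this]
        · simp only [sK, if_pos hKpos]
          rw [div_le_iff₀ hsq]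
          have := Real.sin_le (mul_nonneg hsq.le ht0)
          calc Real.sin (Real.sqrt K * t) ≤ Real.sqrt K * t := this
            _ = 1 * t * Real.sqrt K := by ring)
      (fun t ht => by
        simp only [sK, if_pos hKpos]
        have hx0 : 0 ≤ Real.sqrt K * t := mul_nonneg hsq.le ht.1
        have hx2 : Real.sqrt K * t ≤ Real.pi / 2 := by
          have : Real.sqrt K * t ≤ Real.sqrt K * r₂ := by
            nlinarith [ht.2, hsq, h12]
          linarith
        have := aux_exp_sin (Real.sqrt K * t) hx0 hx2
        rw [le_div_iff₀ hsq]
        have hee : Real.exp (-(c * r₂)) ≤ Real.exp (-(Real.sqrt K * t)) := by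
          apply Real.exp_le_exp.2
          rw [hcK]
          have : Real.sqrt K * t ≤ Real.sqrt K * r₂ := by
            nlinarith [ht.2, hsq, h12]
          linarith
        have hmul : Real.exp (-(Real.sqrt K * t)) * (Real.sqrt K * t) ≤
            Real.sin (Real.sqrt K * t) := by
          rw [Real.exp_neg]
          rw [inv_mul_le_iff₀ (Real.exp_pos _)]
          linarith
        have ht0 : 0 ≤ t := ht.1
        calc Real.exp (-(c * r₂)) * t * Real.sqrt K
            = Real.exp (-(c * r₂)) * (Real.sqrt K * t) := by ring
          _ ≤ Real.exp (-(Real.sqrt K * t)) * (Real.sqrt K * t) := by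
              apply mul_le_mul_of_nonneg_right hee (by positivity)
          _ ≤ Real.sin (Real.sqrt K * t) := hmul)
    refine le_trans key ?_
    have : (1 / Real.exp (-(c * r₂))) = Real.exp (c * r₂) := by
      rw [Real.exp_neg]; simp
    rw [this]
  · -- K ≤ 0 : a = exp (c * r₂), b = 1
    have key := key_ratio n hn ϑ r₁ r₂ (Real.exp (c * r₂)) 1 hϑ h1 h12
      one_pos (sK K) hfc
      (fun t ht => by
        rcases eq_or_lt_of_le hKnp with hK0 | hKneg
        · simp only [sK, if_neg (by linarith : ¬ 0 < K), if_pos hK0]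
          refine ⟨ht.1, ?_⟩
          nlinarith [Real.one_le_exp (mul_nonneg hc0 hr2.le), ht.1]
        · have hnK : 0 < -K := by linarith
          have hsq : 0 < Real.sqrt (-K) := Real.sqrt_pos.2 hnK
          have hcK : c = Real.sqrt (-K) := by rw [hc, abs_of_neg (by linarith)]
          simp only [sK, if_neg (by linarith : ¬ 0 < K), if_neg (by linarith : K ≠ 0)]
          constructor
          · apply div_nonneg _ hsq.le
            exact le_trans (mul_nonneg hsq.le ht.1)
              (Real.self_le_sinh_iff.2 (mul_nonneg hsq.le ht.1))
          · rw [div_le_iff₀ hsq]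
            have hle := aux_sinh_le (Real.sqrt (-K) * t) (mul_nonneg hsq.le ht.1)
            have hee : Real.exp (Real.sqrt (-K) * t) ≤ Real.exp (c * r₂) := by
              apply Real.exp_le_exp.2
              rw [hcK]
              nlinarith [ht.2, hsq, ht.1]
            calc Real.sinh (Real.sqrt (-K) * t)
                ≤ Real.sqrt (-K) * t * Real.exp (Real.sqrt (-K) * t) := hle
              _ ≤ Real.sqrt (-K) * t * Real.exp (c * r₂) :=
                  mul_le_mul_of_nonneg_left hee (mul_nonneg hsq.le ht.1)
              _ = Real.exp (c * r₂) * t * Real.sqrt (-K) := by ring)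
      (fun t ht => by
        rcases eq_or_lt_of_le hKnp with hK0 | hKneg
        · simp only [sK, if_neg (by linarith : ¬ 0 < K), if_pos hK0]
          linarith [ht.1]
        · have hnK : 0 < -K := by linarith
          have hsq : 0 < Real.sqrt (-K) := Real.sqrt_pos.2 hnK
          simp only [sK, if_neg (by linarith : ¬ 0 < K), if_neg (by linarith : K ≠ 0)]
          rw [le_div_iff₀ hsq]
          have := Real.self_le_sinh_iff.2 (mul_nonneg hsq.le ht.1)
          calc (1:ℝ) * t * Real.sqrt (-K) = Real.sqrt (-K) * t := by ring
            _ ≤ Real.sinh (Real.sqrt (-K) * t) := this)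
    refine le_trans key ?_
    simp
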